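/- Let k be a field of characteristic ≠ 2 and let E be a k-vector space of dimension 2n (n ≥ 1) with a nondegenerate symmetric bilinear form B. Let K ⊆ E be a totally isotropic subspace of dimension n−1, and suppose there exists a Lagrangian L of (E, B) with K ⊆ L. Then there exist exactly two Lagrangians of (E, B) containing K. -/

import Mathlib

open Module

/-- The orthogonal complement of a submodule with respect to a bilinear form:
`perpB B N = {x | B(x,y) = 0 for all y ∈ N}`. -/
def perpB {k M : Type*} [Field k] [AddCommGroup M] [Module k M]
    (B : M →ₗ[k] M →ₗ[k] k) (N : Submodule k M) : Submodule k M where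
  carrier := {x | ∀ y ∈ N, B x y = 0}
  add_mem' := by
    intro a b ha hb y hy
    simp [map_add, ha y hy, hb y hy]
  zero_mem' := by
    intro y hy
    simp
  smul_mem' := by
    intro c a ha y hy
    simp [map_smul, ha y hy]

section Aux

variable {k E : Type*} [Field k] [AddCommGroup E] [Module k E] [FiniteDimensional k E]
variable (B : E →ₗ[k] E →ₗ[k] k)

lemma mem_perpB {N : Submodule k E} {x : E} : x ∈ perpB B N ↔ ∀ y ∈ N, B x y = 0 := Iff.rfl

lemma perpB_eq_orthogonal (hsymm : ∀ x y : E, B x y = B y x) (N : Submodule k E) :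
    perpB B N = LinearMap.BilinForm.orthogonal B N := by
  ext x
  simp only [mem_perpB, LinearMap.BilinForm.mem_orthogonal_iff, LinearMap.BilinForm.IsOrtho]
  constructor
  · intro h y hy; rw [hsymm]; exact h y hy
  · intro h y hy; rw [hsymm]; exact h y hy

lemma perpB_antitone {N₁ N₂ : Submodule k E} (h : N₁ ≤ N₂) : perpB B N₂ ≤ perpB B N₁ :=
  fun x hx y hy => hx y (h hy)

lemma finrank_sup_span_singleton {W : Submodule k E} {x : E} (hx : x ∉ W) :
    finrank k ↥(W ⊔ Submodule.span k {x}) = finrank k W + 1 := by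
  have hx0 : x ≠ 0 := by rintro rfl; exact hx W.zero_mem
  have hd : Disjoint W (Submodule.span k {x}) :=
    (Submodule.disjoint_span_singleton' hx0).mpr hx
  have := Submodule.finrank_sup_add_finrank_inf_eq W (Submodule.span k {x})
  rw [hd.eq_bot, finrank_bot, finrank_span_singleton hx0] at this
  omega

end Aux

/-- Let `E` be a `2n`-dimensional (`n ≥ 1`) vector space over a field of
characteristic ≠ 2 with a nondegenerate symmetric bilinear form `B`. If `K` is a
totally isotropic subspace of dimension `n - 1` contained in some Lagrangian, then
there exist exactly two Lagrangians of `(E,B)` containing `K`. -/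
theorem two_lagrangians_containing_codim_one_isotropic
    {k E : Type*} [Field k] [AddCommGroup E] [Module k E] [FiniteDimensional k E]
    (hchar : (2 : k) ≠ 0)
    (n : ℕ) (hn : 1 ≤ n) (hdim : Module.finrank k E = 2 * n)
    (B : E →ₗ[k] E →ₗ[k] k)
    (hsymm : ∀ x y : E, B x y = B y x)
    (hnondeg : ∀ x : E, (∀ y : E, B x y = 0) → x = 0)
    (K : Submodule k E) (hKiso : K ≤ perpB B K)
    (hKdim : Module.finrank k K = n - 1)
    (L : Submodule k E) (hL : L = perpB B L) (hKL : K ≤ L) :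
    ∃ L₁ L₂ : Submodule k E, L₁ ≠ L₂ ∧
      ∀ N : Submodule k E, (N = perpB B N ∧ K ≤ N) ↔ (N = L₁ ∨ N = L₂) := by
  classical
  have hrefl : LinearMap.BilinForm.IsRefl B := fun x y h => by rw [hsymm]; exact h
  have hBnd : LinearMap.BilinForm.Nondegenerate B :=
    (LinearMap.IsRefl.nondegenerate_iff_separatingLeft hrefl).mpr hnondeg
  have hperp_rank : ∀ N : Submodule k E, finrank k ↥(perpB B N) = 2 * n - finrank k N := by
    intro N
    rw [perpB_eq_orthogonal B hsymm, LinearMap.BilinForm.finrank_orthogonal hBnd, hdim]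
  have hperp_perp : ∀ N : Submodule k E, perpB B (perpB B N) = N := by
    intro N
    rw [perpB_eq_orthogonal B hsymm, perpB_eq_orthogonal B hsymm,
      LinearMap.BilinForm.orthogonal_orthogonal hBnd hrefl]
  -- Any Lagrangian has dimension n
  have hLagdim : ∀ N : Submodule k E, N = perpB B N → finrank k N = n := by
    intro N hN
    have h1 := hperp_rank N
    rw [← hN] at h1
    have h2 : finrank k N ≤ 2 * n := hdim ▸ Submodule.finrank_le N
    omega
  have hLdim : finrank k L = n := hLagdim L hL
  set Kp := perpB B K with hKpdef
  have hKpdim : finrank k Kp = n + 1 := by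
    rw [hKpdef, hperp_rank, hKdim]; omega
  have hLKp : L ≤ Kp := by rw [hL]; exact perpB_antitone B hKL
  -- choose e ∈ L \ K
  have hKlt : K < L := by
    refine lt_of_le_of_ne hKL fun h => ?_
    rw [h, hLdim] at hKdim; omega
  obtain ⟨e, heL, heK⟩ := SetLike.exists_of_lt hKlt
  have heLperp : e ∈ perpB B L := hL ▸ heL
  have hee : B e e = 0 := heLperp e heL
  -- choose f ∈ Kp with B e f ≠ 0
  have heKp' : e ∉ perpB B Kp := by rw [hKpdef, hperp_perp]; exact heK
  obtain ⟨f, hfKp, hef⟩ : ∃ f ∈ Kp, B e f ≠ 0 := by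
    by_contra h; push_neg at h
    exact heKp' fun y hy => h y hy
  -- normalize
  obtain ⟨f₁, hf₁Kp, hef₁⟩ : ∃ f₁ ∈ Kp, B e f₁ = 1 :=
    ⟨(B e f)⁻¹ • f, Submodule.smul_mem _ _ hfKp, by
      rw [map_smul, smul_eq_mul, inv_mul_cancel₀ hef]⟩
  have hf₁e : B f₁ e = 1 := by rw [hsymm]; exact hef₁
  obtain ⟨f', hf'Kp, hef', hf'f'⟩ : ∃ f' ∈ Kp, B e f' = 1 ∧ B f' f' = 0 := by
    refine ⟨f₁ - (B f₁ f₁ / 2) • e,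
      Submodule.sub_mem _ hf₁Kp (Submodule.smul_mem _ _ (hLKp heL)), ?_, ?_⟩
    · rw [map_sub, hef₁, map_smul, smul_eq_mul, hee, mul_zero, sub_zero]
    · simp only [map_sub, map_smul, LinearMap.sub_apply, LinearMap.smul_apply, smul_eq_mul,
        hef₁, hf₁e, hee]
      field_simp
      ring
  have hf'e : B f' e = 1 := by rw [hsymm]; exact hef'
  have hf'K : ∀ y ∈ K, B f' y = 0 := hf'Kp
  have hf'L : f' ∉ L := fun h => one_ne_zero (hef' ▸ (heLperp f' h))
  have hf'notK : f' ∉ K := fun h => hf'L (hKL h)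
  -- the second Lagrangian
  set L₂ : Submodule k E := K ⊔ Submodule.span k {f'} with hL₂def
  have hL₂dim : finrank k L₂ = n := by
    rw [hL₂def, finrank_sup_span_singleton hf'notK, hKdim]; omega
  have hKL₂ : K ≤ L₂ := le_sup_left
  have hf'L₂ : f' ∈ L₂ := Submodule.mem_sup_right (Submodule.mem_span_singleton_self f')
  have key : ∀ x : E, (∀ y ∈ K, B x y = 0) → B x f' = 0 → x ∈ perpB B L₂ := by
    intro x hxK hxf y hy
    obtain ⟨u, hu, v, hv, rfl⟩ := Submodule.mem_sup.mp hy
    obtain ⟨a, rfl⟩ := Submodule.mem_span_singleton.mp hv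
    simp [map_add, map_smul, hxK u hu, hxf]
  have hL₂iso : L₂ ≤ perpB B L₂ := by
    rw [hL₂def]
    refine sup_le (fun κ hκ => key κ (fun y hy => hKiso hκ y hy)
      (by rw [hsymm]; exact hf'K κ hκ)) ?_
    rw [Submodule.span_singleton_le_iff_mem]
    exact key f' hf'K hf'f'
  have hL₂ : L₂ = perpB B L₂ := by
    refine Submodule.eq_of_le_of_finrank_le hL₂iso ?_
    rw [hperp_rank, hL₂dim]; omega
  have hLne : L ≠ L₂ := fun h => hf'L (h ▸ hf'L₂)
  -- L = K ⊔ span e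
  have hLe : K ⊔ Submodule.span k {e} = L := by
    refine Submodule.eq_of_le_of_finrank_le
      (sup_le hKL (Submodule.span_le.mpr (by rintro x rfl; exact heL))) ?_
    rw [hLdim, finrank_sup_span_singleton heK, hKdim]; omega
  -- Kp = L ⊔ span f'
  have hKpeq : L ⊔ Submodule.span k {f'} = Kp := by
    refine Submodule.eq_of_le_of_finrank_le
      (sup_le hLKp (Submodule.span_le.mpr (by rintro x rfl; exact hf'Kp))) ?_
    rw [hKpdim, finrank_sup_span_singleton hf'L, hLdim]
  refine ⟨L, L₂, hLne, fun N => ⟨?_, ?_⟩⟩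
  · rintro ⟨hN, hKN⟩
    have hNdim : finrank k N = n := hLagdim N hN
    have hNKp : N ≤ Kp := by rw [hN]; exact perpB_antitone B hKN
    have hKltN : K < N := by
      refine lt_of_le_of_ne hKN fun h => ?_
      rw [h, hNdim] at hKdim; omega
    obtain ⟨v, hvN, hvK⟩ := SetLike.exists_of_lt hKltN
    -- decompose v
    have hvKp : v ∈ Kp := hNKp hvN
    rw [← hKpeq] at hvKp
    obtain ⟨u, hu, w, hw, rfl⟩ := Submodule.mem_sup.mp hvKp
    obtain ⟨b, rfl⟩ := Submodule.mem_span_singleton.mp hw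
    rw [← hLe] at hu
    obtain ⟨κ, hκ, w', hw', rfl⟩ := Submodule.mem_sup.mp hu
    obtain ⟨a, rfl⟩ := Submodule.mem_span_singleton.mp hw'
    set v : E := κ + a • e + b • f' with hvdef
    -- B v v = 0
    have hvv : B v v = 0 := (hN ▸ hvN) v hvN
    have hκκ : B κ κ = 0 := hKiso hκ κ hκ
    have heκ : B e κ = 0 := heLperp κ (hKL hκ)
    have hκe : B κ e = 0 := by rw [hsymm]; exact heκ
    have hf'κ : B f' κ = 0 := hf'K κ hκ
    have hκf' : B κ f' = 0 := by rw [hsymm]; exact hf'κ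
    have hab : a * b = 0 := by
      have : (2 : k) * (a * b) = 0 := by
        rw [← hvv, hvdef]
        simp only [map_add, map_smul, LinearMap.add_apply, LinearMap.smul_apply, smul_eq_mul,
          hκκ, heκ, hκe, hf'κ, hκf', hee, hf'f', hef', hf'e]
        ring
      rcases mul_eq_zero.mp this with h | h
      · exact absurd h hchar
      · exact h
    -- N = K ⊔ span v
    have hNeq : K ⊔ Submodule.span k {v} = N := by
      refine Submodule.eq_of_le_of_finrank_le
        (sup_le hKN (Submodule.span_le.mpr (by rintro x rfl; exact hvN))) ?_
      rw [hNdim, finrank_sup_span_singleton hvK, hKdim]; omega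
    rcases mul_eq_zero.mp hab with ha | hb
    · -- a = 0 : v ∈ L₂, so N = L₂
      right
      have hvL₂ : v ∈ L₂ := by
        rw [hvdef, ha, zero_smul, add_zero]
        exact Submodule.add_mem _ (hKL₂ hκ) (Submodule.smul_mem _ _ hf'L₂)
      refine Submodule.eq_of_le_of_finrank_le ?_ (by rw [hNdim, hL₂dim])
      rw [← hNeq]
      exact sup_le hKL₂ (Submodule.span_le.mpr (by rintro x rfl; exact hvL₂))
    · -- b = 0 : v ∈ L, so N = L
      left
      have hvL : v ∈ L := by
        rw [hvdef, hb, zero_smul, add_zero]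
        exact Submodule.add_mem _ (hKL hκ) (Submodule.smul_mem _ _ heL)
      refine Submodule.eq_of_le_of_finrank_le ?_ (by rw [hNdim, hLdim])
      rw [← hNeq]
      exact sup_le hKL (Submodule.span_le.mpr (by rintro x rfl; exact hvL))
  · rintro (rfl | rfl)
    · exact ⟨hL, hKL⟩
    · exact ⟨hL₂, hKL₂⟩
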